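/- Lorenz curve criterion for survival of the strongest-first society: Let X be a nonnegative random variable with continuous, strictly increasing cumulative distribution function F satisfying F(0) = 0, finite mean μ > 0, and let m > 1 and 0 < r ≤ m·μ. Let θ ≥ 0 satisfy m∫_θ^∞ x dF(x) = r. Then m·[1 − F(θ)] > 1 if and only if LC(1 − 1/m) > 1 − r/(m·μ). -/

import Mathlib

open MeasureTheory Filter Set

noncomputable section

/-- Quantile function (generalized inverse) `F⁻¹(t) = inf {x ≥ 0 : F(x) ≥ t}`. -/
def quantile (F : ℝ → ℝ) (t : ℝ) : ℝ := sInf {x | 0 ≤ x ∧ t ≤ F x}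

/-- Lorenz curve `LC(p) = (1/μ) ∫₀^p F⁻¹(t) dt` of a distribution function `F`
with mean `μ`. -/
def lorenz (F : ℝ → ℝ) (μ : ℝ) (p : ℝ) : ℝ := (1 / μ) * ∫ t in (0:ℝ)..p, quantile F t

lemma quantile_nonneg (F : ℝ → ℝ) (t : ℝ) : 0 ≤ quantile F t :=
  Real.sInf_nonneg (fun _ hx => hx.1)

lemma quantile_mem {F : ℝ → ℝ} (hcont : Continuous F) {t b : ℝ} (hb : 0 ≤ b) (htb : t ≤ F b) :
    quantile F t ∈ {x | 0 ≤ x ∧ t ≤ F x} := by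
  have hcl : IsClosed {x | 0 ≤ x ∧ t ≤ F x} :=
    (isClosed_le continuous_const continuous_id).inter (isClosed_le continuous_const hcont)
  exact hcl.csInf_mem ⟨b, hb, htb⟩ ⟨0, fun _ hx => hx.1⟩

lemma quantile_F_eq {F : ℝ → ℝ} (hcont : Continuous F) (hF0 : F 0 = 0)
    {t b : ℝ} (ht : 0 < t) (hb : 0 ≤ b) (htb : t ≤ F b) :
    F (quantile F t) = t := by
  obtain ⟨hq0, hqt⟩ := quantile_mem hcont hb htb
  have : t ∈ Icc (F 0) (F (quantile F t)) := ⟨by rw [hF0]; exact ht.le, hqt⟩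
  obtain ⟨y, hy, hFy⟩ := intermediate_value_Icc hq0 hcont.continuousOn this
  have h1 : quantile F t ≤ y := csInf_le ⟨0, fun _ hx => hx.1⟩ ⟨hy.1, hFy.ge⟩
  have : y = quantile F t := le_antisymm hy.2 h1
  rw [← this, hFy]

lemma lt_quantile_iff {F : ℝ → ℝ} (hmono : Monotone F) (hcont : Continuous F) (hF0 : F 0 = 0)
    {t b s : ℝ} (ht : 0 < t) (hb : 0 ≤ b) (htb : t ≤ F b) (hs : 0 ≤ s) :
    s < quantile F t ↔ F s < t := by
  constructor
  · intro h
    by_contra hc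
    have hmem : s ∈ {x | 0 ≤ x ∧ t ≤ F x} := ⟨hs, not_lt.mp hc⟩
    have hbdd : BddBelow {x | 0 ≤ x ∧ t ≤ F x} := ⟨0, fun _ hx => hx.1⟩
    exact absurd (csInf_le hbdd hmem) (not_le.mpr h)
  · intro h
    by_contra hc
    have := hmono (not_lt.mp hc)
    rw [quantile_F_eq hcont hF0 ht hb htb] at this
    exact absurd (this.trans_lt h) (lt_irrefl t)

lemma quantile_pos {F : ℝ → ℝ} (hmono : Monotone F) (hcont : Continuous F) (hF0 : F 0 = 0)
    {t b : ℝ} (ht : 0 < t) (hb : 0 ≤ b) (htb : t ≤ F b) :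
    0 < quantile F t :=
  (lt_quantile_iff hmono hcont hF0 ht hb htb le_rfl).mpr (by rw [hF0]; exact ht)

lemma quantile_monotoneOn {F : ℝ → ℝ} {b : ℝ} (hb : 0 ≤ b) :
    MonotoneOn (quantile F) (Iic (F b)) := by
  intro t _ t' ht' htt'
  exact csInf_le_csInf ⟨0, fun _ hx => hx.1⟩ ⟨b, hb, ht'⟩
    (fun x hx => ⟨hx.1, htt'.trans hx.2⟩)

/-- **Lorenz curve criterion for survival of the strongest-first society.**
If `X ≥ 0` has continuous, strictly increasing distribution function `F` with
`F(0) = 0` and finite mean `μ > 0`, `m > 1`, `0 < r ≤ m·μ`, and `θ ≥ 0`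
satisfies `m ∫_θ^∞ x dF(x) = r`, then
`m·[1 − F(θ)] > 1 ↔ LC(1 − 1/m) > 1 − r/(m·μ)`. -/
theorem lorenz_sfs_survival_criterion
    {Ω : Type*} [MeasurableSpace Ω] (P : Measure Ω) [IsProbabilityMeasure P]
    (X : Ω → ℝ) (hXmeas : Measurable X) (hXnonneg : ∀ ω, 0 ≤ X ω)
    (hXint : Integrable X P)
    (μ : ℝ) (hμ : μ = ∫ ω, X ω ∂P) (hμpos : 0 < μ)
    (F : ℝ → ℝ) (hF : ∀ x, F x = (P {ω | X ω ≤ x}).toReal)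
    (hFcont : Continuous F) (hFmono : StrictMonoOn F (Ici 0)) (hF0 : F 0 = 0)
    (m r : ℝ) (hm : 1 < m) (hrpos : 0 < r) (hrm : r ≤ m * μ)
    (θ : ℝ) (hθnonneg : 0 ≤ θ)
    (hθ : m * ∫ ω in {ω | θ < X ω}, X ω ∂P = r) :
    1 < m * (1 - F θ) ↔ 1 - r / (m * μ) < lorenz F μ (1 - 1 / m) := by
  have hm0 : (0:ℝ) < m := lt_trans zero_lt_one hm
  set p : ℝ := 1 - 1/m with hp_def
  set q : ℝ := F θ with hq_def
  have hFmonoG : Monotone F := by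
    intro x y hxy
    rw [hF, hF]
    exact ENNReal.toReal_mono (measure_ne_top _ _)
      (measure_mono (fun ω h => le_trans h hxy))
  have hF_nonneg : ∀ x, 0 ≤ F x := fun x => by rw [hF]; exact ENNReal.toReal_nonneg
  have hp1 : p < 1 := by
    have : 0 < 1/m := by positivity
    simp only [hp_def]; linarith
  have hp0 : 0 ≤ p := by
    have : 1/m < 1 := by rw [div_lt_one hm0]; exact hm
    simp only [hp_def]; linarith
  -- find b with everything below F b
  obtain ⟨b, hb0, hpb, hqb⟩ : ∃ b, 0 ≤ b ∧ p ≤ F b ∧ q ≤ F b := by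
    have hmonoS : Monotone (fun n : ℕ => {ω | X ω ≤ (n:ℝ)}) :=
      fun i j hij => fun ω (h : X ω ≤ (i:ℝ)) => show X ω ≤ (j:ℝ) from le_trans h (Nat.cast_le.mpr hij)
    have hU : ⋃ n : ℕ, {ω | X ω ≤ (n:ℝ)} = univ := by
      ext ω
      simp only [mem_iUnion, mem_setOf_eq, mem_univ, iff_true]
      exact exists_nat_ge (X ω)
    have ht1 : Tendsto (fun n : ℕ => P {ω | X ω ≤ (n:ℝ)}) atTop (nhds 1) := by
      have h := tendsto_measure_iUnion_atTop (μ := P) hmonoS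
      rwa [hU, measure_univ] at h
    have ht2 : Tendsto (fun n : ℕ => F (n:ℝ)) atTop (nhds 1) := by
      have h := (ENNReal.tendsto_toReal ENNReal.one_ne_top).comp ht1
      simpa [hF, Function.comp_def] using h
    obtain ⟨n, hn⟩ := (ht2.eventually (eventually_ge_nhds hp1)).exists
    exact ⟨max (n:ℝ) θ, le_trans (Nat.cast_nonneg n) (le_max_left _ _),
      le_trans hn (hFmonoG (le_max_left _ _)), hFmonoG (le_max_right _ _)⟩
  have hq0 : 0 ≤ q := hF_nonneg θ
  have hsθ : MeasurableSet {ω | X ω ≤ θ} := hXmeas measurableSet_Iic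
  -- interval integrability
  have hii : ∀ u v : ℝ, 0 ≤ u → v ≤ F b → u ≤ v →
      IntervalIntegrable (quantile F) volume u v := by
    intro u v hu hv huv
    refine ((quantile_monotoneOn hb0).mono ?_).intervalIntegrable
    intro x hx
    rw [uIcc_of_le huv] at hx
    exact le_trans hx.2 hv
  -- key layer cake identity
  have hAB : ∫ ω in {ω | X ω ≤ θ}, X ω ∂P = ∫ t in (0:ℝ)..q, quantile F t := by
    have hYint : Integrable ({ω | X ω ≤ θ}.indicator X) P := hXint.indicator hsθ
    have hYnn : 0 ≤ᵐ[P] {ω | X ω ≤ θ}.indicator X :=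
      ae_of_all _ (fun ω => Set.indicator_nonneg (fun a _ => hXnonneg a) ω)
    have h1 := hYint.integral_eq_integral_meas_lt hYnn
    have hQint : Integrable (quantile F) (volume.restrict (Ioc 0 q)) := by
      have h := hii 0 q le_rfl hqb hq0
      rwa [intervalIntegrable_iff, uIoc_of_le hq0] at h
    have hQnn : 0 ≤ᵐ[volume.restrict (Ioc 0 q)] quantile F :=
      ae_of_all _ (fun t => quantile_nonneg F t)
    have h2 := hQint.integral_eq_integral_meas_lt hQnn
    have key : ∀ s ∈ Ioi (0:ℝ), (P {a | s < {ω | X ω ≤ θ}.indicator X a}).toReal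
        = ((volume.restrict (Ioc 0 q)) {t | s < quantile F t}).toReal := by
      intro s hs
      rw [mem_Ioi] at hs
      have hsetQ : {t | s < quantile F t} ∩ Ioc 0 q = Ioc (F s) q := by
        ext t
        simp only [mem_inter_iff, mem_setOf_eq, mem_Ioc]
        constructor
        · rintro ⟨hlt, ht0, htq⟩
          exact ⟨(lt_quantile_iff hFmonoG hFcont hF0 ht0 hb0 (le_trans htq hqb) hs.le).mp hlt,
            htq⟩
        · rintro ⟨hFst, htq⟩
          have ht0 : 0 < t := lt_of_le_of_lt (hF_nonneg s) hFst
          exact ⟨(lt_quantile_iff hFmonoG hFcont hF0 ht0 hb0 (le_trans htq hqb) hs.le).mpr hFst,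
            ht0, htq⟩
      have hRHSval : ((volume.restrict (Ioc 0 q)) {t | s < quantile F t}).toReal
          = max (q - F s) 0 := by
        rw [Measure.restrict_apply' measurableSet_Ioc, hsetQ, Real.volume_Ioc,
          ENNReal.toReal_ofReal']
      rw [hRHSval]
      by_cases hsθ' : s ≤ θ
      · have hset1 : {a | s < {ω | X ω ≤ θ}.indicator X a}
            = {a | X a ≤ θ} \ {a | X a ≤ s} := by
          ext a
          simp only [mem_setOf_eq, mem_diff]
          constructor
          · intro hlt
            by_cases h : X a ≤ θ
            · simp only [Set.indicator_apply, mem_setOf_eq, if_pos h] at hlt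
              exact ⟨h, not_le.mpr hlt⟩
            · simp only [Set.indicator_apply, mem_setOf_eq, if_neg h] at hlt
              exact absurd hlt (not_lt.mpr hs.le)
          · rintro ⟨h1', h2'⟩
            simp only [Set.indicator_apply, mem_setOf_eq, if_pos h1']
            exact not_le.mp h2'
        have hsub : {a | X a ≤ s} ⊆ {a | X a ≤ θ} := fun a ha => le_trans ha hsθ'
        have hd : P ({a | X a ≤ θ} \ {a | X a ≤ s}) = P {a | X a ≤ θ} - P {a | X a ≤ s} :=
          measure_diff hsub (hXmeas measurableSet_Iic).nullMeasurableSet (measure_ne_top _ _)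
        rw [hset1, hd, ENNReal.toReal_sub_of_le (measure_mono hsub) (measure_ne_top _ _),
          ← hF, ← hF]
        rw [max_eq_left (by simp only [hq_def]; linarith [hFmonoG hsθ'])]
      · have hset1 : {a | s < {ω | X ω ≤ θ}.indicator X a} = ∅ := by
          ext a
          simp only [mem_setOf_eq, mem_empty_iff_false, iff_false, not_lt]
          by_cases h : X a ≤ θ
          · simp only [Set.indicator_apply, mem_setOf_eq, if_pos h]
            exact le_trans h (not_le.mp hsθ').le
          · simp only [Set.indicator_apply, mem_setOf_eq, if_neg h]
            exact hs.le
        have hle : q - F s ≤ 0 := by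
          simp only [hq_def]
          linarith [hFmonoG (not_le.mp hsθ').le]
        simp [hset1, max_eq_right hle]
    rw [← integral_indicator hsθ, h1, intervalIntegral.integral_of_le hq0, h2]
    exact setIntegral_congr_fun measurableSet_Ioi key
  -- mean decomposition
  have hA : ∫ ω in {ω | X ω ≤ θ}, X ω ∂P = μ - r/m := by
    have hcompl : {ω | X ω ≤ θ}ᶜ = {ω | θ < X ω} := by
      ext ω; simp [not_le]
    have hsum := integral_add_compl hsθ hXint
    rw [hcompl] at hsum
    have hr : ∫ ω in {ω | θ < X ω}, X ω ∂P = r/m := by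
      field_simp [hm0.ne'] at hθ ⊢
      linarith [hθ]
    rw [hr] at hsum
    rw [← hμ] at hsum
    linarith
  -- strict monotonicity of the partial quantile integral
  have hmonoI : ∀ u v : ℝ, 0 ≤ u → u ≤ F b → 0 ≤ v → v ≤ F b →
      ((∫ t in (0:ℝ)..u, quantile F t) < (∫ t in (0:ℝ)..v, quantile F t) ↔ u < v) := by
    have key : ∀ u v : ℝ, 0 ≤ u → v ≤ F b → u < v →
        (∫ t in (0:ℝ)..u, quantile F t) < (∫ t in (0:ℝ)..v, quantile F t) := by
      intro u v hu hv huv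
      have h1 : IntervalIntegrable (quantile F) volume 0 u :=
        hii 0 u le_rfl (le_trans huv.le hv) hu
      have h2 : IntervalIntegrable (quantile F) volume u v := hii u v hu hv huv.le
      have hsplit : (∫ t in (0:ℝ)..u, quantile F t) + (∫ t in u..v, quantile F t)
          = ∫ t in (0:ℝ)..v, quantile F t :=
        intervalIntegral.integral_add_adjacent_intervals h1 h2
      have hpos : 0 < ∫ t in u..v, quantile F t := by
        refine intervalIntegral.intervalIntegral_pos_of_pos_on h2 ?_ huv
        intro t ht
        exact quantile_pos hFmonoG hFcont hF0 (lt_of_le_of_lt hu ht.1) hb0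
          (le_trans ht.2.le hv)
      linarith
    intro u v hu hub hv hvb
    constructor
    · intro h
      by_contra hc
      rcases eq_or_lt_of_le (not_lt.mp hc) with heq | hlt
      · rw [heq] at h; exact absurd h (lt_irrefl _)
      · exact absurd (key v u hv hub hlt) (not_lt.mpr h.le)
    · exact key u v hu hvb
  -- put it together
  have hLHS : (1 < m * (1 - F θ)) ↔ q < p := by
    have h1m : m * (1/m) = 1 := mul_one_div_cancel hm0.ne'
    constructor
    · intro h; simp only [hp_def]; nlinarith
    · intro h; simp only [hp_def] at h; nlinarith
  have hqb' : q ≤ F b := hqb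
  have hRHS : (1 - r / (m * μ) < lorenz F μ p) ↔
      ((∫ t in (0:ℝ)..q, quantile F t) < (∫ t in (0:ℝ)..p, quantile F t)) := by
    have hval : 1 - r / (m * μ) = (1/μ) * ∫ t in (0:ℝ)..q, quantile F t := by
      rw [← hAB, hA]
      field_simp
    rw [lorenz, hval]
    exact mul_lt_mul_iff_right₀ (by positivity : (0:ℝ) < 1 / μ)
  rw [hLHS, hRHS, hmonoI q p hq0 hqb hp0 hpb]

end
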